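/- Let G be a group, let {H_λ}_{λ∈Λ} be a family of subgroups of G, and for each λ let N_λ be a nontrivial normal subgroup of H_λ. Let N = ⋃_{λ∈Λ} N_λ, ⟪N⟫ the normal closure of N in G, Q = G/⟪N⟫, and R_λ = H_λ/N_λ, each R_λ being identified with a subgroup of Q via the (injective) natural homomorphism. If the triple (G, {H_λ}_{λ∈Λ}, {N_λ}_{λ∈Λ}) has the Cohen-Lyndon property, then there is an isomorphism of ℤQ-modules Rel(G, ⟪N⟫) ≅ ⨁_{λ∈Λ} (ℤQ ⊗_{ℤR_λ} Rel(H_λ, N_λ)). -/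

import Mathlib

set_option linter.unusedSectionVars false
set_option linter.unreachableTactic false
set_option linter.unusedTactic false
set_option maxHeartbeats 1000000


/-- A subset `T` of `G` is a left transversal of a subgroup `K` if every left coset
of `K` in `G` contains exactly one element of `T`. -/
def IsLeftTransversal {G : Type*} [Group G] (K : Subgroup G) (T : Set G) : Prop :=
  ∀ g : G, ∃! t : G, t ∈ T ∧ t⁻¹ * g ∈ K

/-- The normal closure in `G` of (the subgroup generated by) the union of a family of
subgroups `N i`. -/
abbrev familyNC {G : Type*} [Group G] {ι : Type*} (N : ι → Subgroup G) : Subgroup G :=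
  Subgroup.normalClosure (⋃ i, (N i : Set G))

/-- The triple `(G, {H i}, {N i})` has the Cohen-Lyndon property, witnessed by the left
transversals `T i` of `H i ⟪N⟫` in `G`: the canonical homomorphism from the free product
of the conjugates `t (N i) t⁻¹`, indexed by pairs `(i, t)` with `t ∈ T i`, to `G` is
injective with image the normal closure `⟪N⟫`. -/
def CohenLyndonFamilyWith {G : Type*} [Group G] {ι : Type*}
    (H : ι → Subgroup G) (N : ι → Subgroup G) (T : ι → Set G) : Prop :=
  (∀ i, IsLeftTransversal (H i ⊔ familyNC N) (T i)) ∧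
  Function.Injective (Monoid.CoprodI.lift
    fun p : (Σ i, ↥(T i)) => ((N p.1).map (MulAut.conj (p.2 : G)).toMonoidHom).subtype) ∧
  (Monoid.CoprodI.lift
    fun p : (Σ i, ↥(T i)) => ((N p.1).map (MulAut.conj (p.2 : G)).toMonoidHom).subtype).range
    = familyNC N

/-- The triple `(G, {H i}, {N i})` has the Cohen-Lyndon property. -/
def CohenLyndonFamily {G : Type*} [Group G] {ι : Type*}
    (H : ι → Subgroup G) (N : ι → Subgroup G) : Prop :=
  ∃ T : ι → Set G, CohenLyndonFamilyWith H N T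

open scoped TensorProduct DirectSum

/-- The `ℤQ`-submodule of relations defining the induced module
`ℤQ ⊗_{ℤR} Rel(A, N)` (where `R = A/N` maps to `Q` via the homomorphism induced by `f`)
as a quotient of `ℤQ ⊗_ℤ Rel(A, N)`; here `Rel(A, N)` is the abelianization of `N`,
on which `h ∈ A` acts by conjugation. -/
noncomputable def relSub (Q : Type*) [Group Q] (A : Type*) [Group A]
    (N : Subgroup A) [N.Normal] (f : A →* Q) :
    Submodule (MonoidAlgebra ℤ Q)
      (MonoidAlgebra ℤ Q ⊗[ℤ] Additive (Abelianization ↥N)) :=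
  Submodule.span (MonoidAlgebra ℤ Q)
    {x | ∃ (a : MonoidAlgebra ℤ Q) (h : A) (m : Additive (Abelianization ↥N)),
      x = (a * MonoidAlgebra.of ℤ Q (f h)) ⊗ₜ[ℤ] m -
        a ⊗ₜ[ℤ] Additive.ofMul ((Abelianization.map (MulAut.conjNormal h).toMonoidHom)
          (Additive.toMul m))}

/-- `Rel(G, K)` (the abelianization of `K`, with the `Q = G/K` action induced by
conjugation) is isomorphic, as a `ℤQ`-module, to the direct sum over `i` of the induced
modules `ℤQ ⊗_{ℤR_i} Rel(A i, N i)`: there is an additive isomorphism which intertwines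
the conjugation action of `G` (inducing the `Q`-action on the left) with multiplication
by group elements of `Q` in the group ring (the `Q`-action on the right). -/
noncomputable def RelModuleIsoIndFam (G : Type*) [Group G] {ι : Type*} {A : ι → Type*}
    [∀ i, Group (A i)] (f : ∀ i, A i →* G) (N : ∀ i, Subgroup (A i)) [∀ i, (N i).Normal]
    (K : Subgroup G) [K.Normal] : Prop :=
  ∃ e : Additive (Abelianization ↥K) ≃+
      (⨁ i, ((MonoidAlgebra ℤ (G ⧸ K) ⊗[ℤ] Additive (Abelianization ↥(N i))) ⧸
        relSub (G ⧸ K) (A i) (N i) ((QuotientGroup.mk' K).comp (f i)))),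
    ∀ (g : G) (x : Additive (Abelianization ↥K)),
      e (Additive.ofMul ((Abelianization.map (MulAut.conjNormal g).toMonoidHom)
          (Additive.toMul x))) =
        MonoidAlgebra.of ℤ (G ⧸ K) (QuotientGroup.mk g) • e x

/-! ### Auxiliary constructions -/

namespace CLProof

variable {G : Type*} [Group G] {ι : Type*} (H : ι → Subgroup G)
  (N : ∀ i, Subgroup ↥(H i)) [∀ i, (N i).Normal]

/-- The normal closure. -/
abbrev K : Subgroup G := familyNC (fun j => (N j).map (H j).subtype)

abbrev Q := G ⧸ K H N

abbrev M (i : ι) := Additive (Abelianization ↥(N i))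

abbrev AddK := Additive (Abelianization ↥(K H N))

/-- Inclusion of `N i` into `K`. -/
def inclK (i : ι) : ↥(N i) →* ↥(K H N) :=
  ((H i).subtype.comp (N i).subtype).codRestrict _ (fun n =>
    Subgroup.subset_normalClosure (Set.mem_iUnion.2 ⟨i, ⟨n, n.2, rfl⟩⟩))

@[simp] lemma inclK_coe (i : ι) (n : ↥(N i)) : (inclK H N i n : G) = ((n : ↥(H i)) : G) := rfl

/-- Conjugation action on the abelianization of `K`. -/
def conjK (g : G) : Abelianization ↥(K H N) →* Abelianization ↥(K H N) :=
  Abelianization.map (MulAut.conjNormal g).toMonoidHom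

@[simp] lemma conjK_of (g : G) (x : ↥(K H N)) :
    conjK H N g (Abelianization.of x) = Abelianization.of (MulAut.conjNormal g x) := rfl

lemma ab_of_surj {Γ : Type*} [Group Γ] (y : Abelianization Γ) : ∃ x, Abelianization.of x = y :=
  QuotientGroup.mk_surjective y

/-- Conjugation as a homomorphism to `Monoid.End`. -/
def conjGEnd : G →* Monoid.End (Abelianization ↥(K H N)) where
  toFun g := conjK H N g
  map_one' := by
    refine DFunLike.ext _ _ fun x => ?_
    obtain ⟨x, rfl⟩ := ab_of_surj x
    show conjK H N 1 (Abelianization.of x) = Abelianization.of x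
    rw [conjK_of, map_one]
    rfl
  map_mul' g₁ g₂ := by
    refine DFunLike.ext _ _ fun x => ?_
    obtain ⟨x, rfl⟩ := ab_of_surj x
    show conjK H N (g₁ * g₂) (Abelianization.of x)
      = conjK H N g₁ (conjK H N g₂ (Abelianization.of x))
    simp only [conjK_of]
    congr 1
    rw [map_mul]
    rfl

/-- The conjugation action of `Q` on the abelianization of `K`. -/
def conjQ : Q H N →* Monoid.End (Abelianization ↥(K H N)) :=
  QuotientGroup.lift _ (conjGEnd H N) (by
    intro k hk
    refine DFunLike.ext _ _ fun x => ?_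
    obtain ⟨x, rfl⟩ := ab_of_surj x
    show conjK H N k (Abelianization.of x) = Abelianization.of x
    rw [conjK_of]
    have : MulAut.conjNormal k x = ⟨k, hk⟩ * x * ⟨k, hk⟩⁻¹ := by
      ext; simp [MulAut.conjNormal_apply]
    rw [this]
    simp only [map_mul, map_inv]
    rw [mul_comm _ (Abelianization.of x), mul_inv_cancel_right])

@[simp] lemma conjQ_mk (g : G) : conjQ H N (QuotientGroup.mk g) = conjGEnd H N g := rfl

/-- Additive version of the `Q`-action. -/
def conjQA (q : Q H N) : AddK H N →+ AddK H N :=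
  MonoidHom.toAdditive (conjQ H N q)

lemma conjQA_mul (q₁ q₂ : Q H N) (x : AddK H N) :
    conjQA H N (q₁ * q₂) x = conjQA H N q₁ (conjQA H N q₂ x) := by
  simp only [conjQA, map_mul]
  rfl

/-- The inclusion on abelianizations, additively. -/
def inclAb (i : ι) : M H N i →+ AddK H N :=
  MonoidHom.toAdditive (Abelianization.map (inclK H N i))

/-- The bilinear map underlying `ψ`. -/
noncomputable def psiBil (i : ι) :
    MonoidAlgebra ℤ (Q H N) →ₗ[ℤ] M H N i →ₗ[ℤ] AddK H N :=
  (Finsupp.lsum ℤ (fun q => LinearMap.toSpanSingleton ℤ _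
    (((conjQA H N q).comp (inclAb H N i)).toIntLinearMap))).comp
    (MonoidAlgebra.coeffLinearEquiv ℤ).toLinearMap

/-- The evaluation map `ℤQ ⊗ M i → K^{ab}`. -/
noncomputable def psi (i : ι) :
    (MonoidAlgebra ℤ (Q H N) ⊗[ℤ] M H N i) →ₗ[ℤ] AddK H N :=
  TensorProduct.lift (psiBil H N i)

lemma psi_single (i : ι) (q : Q H N) (c : ℤ) (m : M H N i) :
    psi H N i (MonoidAlgebra.single q c ⊗ₜ[ℤ] m) = c • conjQA H N q (inclAb H N i m) := by
  show psiBil H N i (MonoidAlgebra.single q c) m = _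
  rw [psiBil, LinearMap.comp_apply]
  erw [Finsupp.lsum_single]
  rw [LinearMap.toSpanSingleton_apply]
  rfl

lemma psi_of (i : ι) (q : Q H N) (m : M H N i) :
    psi H N i (MonoidAlgebra.of ℤ (Q H N) q ⊗ₜ[ℤ] m) = conjQA H N q (inclAb H N i m) := by
  rw [MonoidAlgebra.of_apply, psi_single, one_smul]

end CLProof
namespace CLProof

variable {G : Type*} [Group G] {ι : Type*} (H : ι → Subgroup G)
  (N : ∀ i, Subgroup ↥(H i)) [∀ i, (N i).Normal] [DecidableEq ι]

/-- The map `H i → Q`. -/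
abbrev fQ (i : ι) : ↥(H i) →* Q H N :=
  (QuotientGroup.mk' (K H N)).comp (H i).subtype

/-- The key identity: the action of `f h` on the image of `M i` matches the
conjugation action of `h` on `M i`. -/
lemma conjQA_fQ (i : ι) (h : ↥(H i)) (m : M H N i) :
    conjQA H N (fQ H N i h) (inclAb H N i m) =
      inclAb H N i (Additive.ofMul
        ((Abelianization.map (MulAut.conjNormal h).toMonoidHom) (Additive.toMul m))) := by
  obtain ⟨n, rfl⟩ := ab_of_surj (Additive.toMul m)
  show conjQA H N (QuotientGroup.mk (h : G)) (inclAb H N i (Additive.ofMul (Abelianization.of n)))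
    = _
  show Additive.ofMul (conjK H N (h : G) (Abelianization.map (inclK H N i) (Abelianization.of n)))
    = Additive.ofMul ((Abelianization.map (inclK H N i))
        ((Abelianization.map (MulAut.conjNormal h).toMonoidHom) (Abelianization.of n)))
  refine congrArg Additive.ofMul ?_
  simp only [Abelianization.map_of, conjK_of]
  first
  | rfl
  | (congr 1
     ext
     simp [MulAut.conjNormal_apply])

lemma psi_gen_zero (i : ι) (a : MonoidAlgebra ℤ (Q H N)) (h : ↥(H i)) (m : M H N i) :
    psi H N i ((a * MonoidAlgebra.of ℤ (Q H N) (fQ H N i h)) ⊗ₜ[ℤ] m -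
      a ⊗ₜ[ℤ] Additive.ofMul ((Abelianization.map (MulAut.conjNormal h).toMonoidHom)
        (Additive.toMul m))) = 0 := by
  rw [map_sub, sub_eq_zero]
  induction a using MonoidAlgebra.induction_linear with
  | zero => simp
  | add f g hf hg =>
      rw [add_mul, TensorProduct.add_tmul, TensorProduct.add_tmul, map_add, map_add, hf, hg]
  | single q c =>
      rw [MonoidAlgebra.of_apply]
      erw [MonoidAlgebra.single_mul_single]
      rw [mul_one]
      rw [psi_single, psi_single, conjQA_mul, conjQA_fQ]

lemma relSub_le_ker (i : ι) (x : MonoidAlgebra ℤ (Q H N) ⊗[ℤ] M H N i)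
    (hx : x ∈ relSub (Q H N) ↥(H i) (N i) (fQ H N i)) : psi H N i x = 0 := by
  have key : ∀ c : MonoidAlgebra ℤ (Q H N), psi H N i (c • x) = 0 := by
    refine Submodule.span_induction
      (p := fun x _ => ∀ c : MonoidAlgebra ℤ (Q H N), psi H N i (c • x) = 0) ?_ ?_ ?_ ?_ hx
    · rintro y ⟨a, h, m, rfl⟩ c
      rw [smul_sub, TensorProduct.smul_tmul', TensorProduct.smul_tmul']
      have : c • (a * MonoidAlgebra.of ℤ (Q H N) (fQ H N i h)) =
          (c * a) * MonoidAlgebra.of ℤ (Q H N) (fQ H N i h) := by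
        rw [smul_eq_mul, mul_assoc]
      rw [this, smul_eq_mul]
      exact psi_gen_zero H N i (c * a) h m
    · intro c; simp
    · intro y z _ _ hy hz c
      rw [smul_add, map_add, hy, hz, add_zero]
    · intro r y _ hy c
      rw [smul_smul]
      exact hy (c * r)
  have := key 1
  rwa [one_smul] at this

/-- The induced module as a quotient. -/
abbrev Ind (i : ι) :=
  (MonoidAlgebra ℤ (Q H N) ⊗[ℤ] M H N i) ⧸ relSub (Q H N) ↥(H i) (N i) (fQ H N i)

/-- `psi` descends to the quotient. -/
noncomputable def psiQ (i : ι) : Ind H N i →ₗ[ℤ] AddK H N :=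
  (Submodule.liftQ ((relSub (Q H N) ↥(H i) (N i) (fQ H N i)).restrictScalars ℤ) (psi H N i)
      (fun x hx => relSub_le_ker H N i x hx)).comp
    (Submodule.Quotient.restrictScalarsEquiv ℤ
      (relSub (Q H N) ↥(H i) (N i) (fQ H N i))).symm.toLinearMap

lemma psiQ_mk (i : ι) (v : MonoidAlgebra ℤ (Q H N) ⊗[ℤ] M H N i) :
    psiQ H N i (Submodule.Quotient.mk v) = psi H N i v := by
  simp [psiQ, Submodule.Quotient.restrictScalarsEquiv_symm_mk]
  rfl

/-- The total map `⨁ Ind i → K^{ab}`. -/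
noncomputable def Psi : (⨁ i, Ind H N i) →+ AddK H N :=
  DirectSum.toAddMonoid (fun i => (psiQ H N i).toAddMonoidHom)

lemma Psi_of (i : ι) (v : MonoidAlgebra ℤ (Q H N) ⊗[ℤ] M H N i) :
    Psi H N (DirectSum.of _ i (Submodule.Quotient.mk v)) = psi H N i v := by
  rw [Psi, DirectSum.toAddMonoid_of]
  exact psiQ_mk H N i v

end CLProof
namespace CLProof

variable {G : Type*} [Group G] {ι : Type*} (H : ι → Subgroup G)
  (N : ∀ i, Subgroup ↥(H i)) [∀ i, (N i).Normal] [DecidableEq ι]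

lemma psi_mulof (i : ι) (g : G) (a : MonoidAlgebra ℤ (Q H N)) (m : M H N i) :
    psi H N i ((MonoidAlgebra.of ℤ (Q H N) (QuotientGroup.mk g) * a) ⊗ₜ[ℤ] m) =
      conjQA H N (QuotientGroup.mk g) (psi H N i (a ⊗ₜ[ℤ] m)) := by
  induction a using MonoidAlgebra.induction_linear with
  | zero => simp
  | add f g hf hg =>
      rw [mul_add, TensorProduct.add_tmul, map_add, TensorProduct.add_tmul, map_add, map_add,
        hf, hg]
  | single q c =>
      rw [MonoidAlgebra.of_apply]
      erw [MonoidAlgebra.single_mul_single]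
      rw [one_mul, psi_single, psi_single, map_zsmul, ← conjQA_mul]

lemma psi_smul_v (i : ι) (g : G) (v : MonoidAlgebra ℤ (Q H N) ⊗[ℤ] M H N i) :
    psi H N i (MonoidAlgebra.of ℤ (Q H N) (QuotientGroup.mk g) • v) =
      conjQA H N (QuotientGroup.mk g) (psi H N i v) := by
  induction v with
  | zero => simp
  | add y z hy hz => rw [smul_add, map_add, hy, hz, ← map_add, ← map_add]
  | tmul a m => rw [TensorProduct.smul_tmul', smul_eq_mul, psi_mulof]

lemma Psi_smul (g : G) (y : ⨁ i, Ind H N i) :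
    Psi H N (MonoidAlgebra.of ℤ (Q H N) (QuotientGroup.mk g) • y) =
      conjQA H N (QuotientGroup.mk g) (Psi H N y) := by
  refine DFunLike.congr_fun
    (?_ : (Psi H N).comp (DistribMulAction.toAddMonoidHom _
        (MonoidAlgebra.of ℤ (Q H N) (QuotientGroup.mk g))) =
      (conjQA H N (QuotientGroup.mk g)).comp (Psi H N)) y
  refine DirectSum.addHom_ext fun i z => ?_
  obtain ⟨v, rfl⟩ := Submodule.Quotient.mk_surjective _ z
  simp only [AddMonoidHom.comp_apply, DistribMulAction.toAddMonoidHom_apply]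
  have h1 : MonoidAlgebra.of ℤ (Q H N) (QuotientGroup.mk g) •
      DirectSum.of (Ind H N) i (Submodule.Quotient.mk v) =
      DirectSum.of (Ind H N) i (MonoidAlgebra.of ℤ (Q H N) (QuotientGroup.mk g) •
        Submodule.Quotient.mk v) := by
    rw [← DirectSum.lof_eq_of (MonoidAlgebra ℤ (Q H N)), ← LinearMap.map_smul,
      DirectSum.lof_eq_of]
  rw [h1, ← Submodule.Quotient.mk_smul, Psi_of, Psi_of, psi_smul_v]

end CLProof
namespace CLProof

variable {G : Type*} [Group G] {ι : Type*} (H : ι → Subgroup G)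
  (N : ∀ i, Subgroup ↥(H i)) [∀ i, (N i).Normal] [DecidableEq ι] (T : ι → Set G)

/-- The conjugated subgroups. -/
abbrev PP (p : Σ i, ↥(T i)) : Subgroup G :=
  (((fun j => (N j).map (H j).subtype) p.1).map (MulAut.conj (p.2 : G)).toMonoidHom)

/-- The canonical map from the free product. -/
noncomputable abbrev phi : Monoid.CoprodI (fun p : Σ i, ↥(T i) => ↥(PP H N T p)) →* G :=
  Monoid.CoprodI.lift
    (fun p : (Σ i, ↥(T i)) =>
      (((fun j => (N j).map (H j).subtype) p.1).map (MulAut.conj (p.2 : G)).toMonoidHom).subtype)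

variable (hrange : (phi H N T).range = K H N)

/-- Corestriction of `phi` to `K`. -/
noncomputable def kinv : Monoid.CoprodI (fun p : Σ i, ↥(T i) => ↥(PP H N T p)) →* ↥(K H N) :=
  (phi H N T).codRestrict _ (fun w => hrange ▸ ⟨w, rfl⟩)

@[simp] lemma kinv_coe (w) : ((kinv H N T hrange w : ↥(K H N)) : G) = phi H N T w := rfl

lemma kinv_bijective (hinj : Function.Injective (phi H N T)) :
    Function.Bijective (kinv H N T hrange) := by
  constructor
  · intro a b hab
    apply hinj
    have := congrArg (Subtype.val) hab
    exact this
  · rintro ⟨y, hy⟩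
    rw [← hrange] at hy
    obtain ⟨w, hw⟩ := hy
    exact ⟨w, Subtype.ext hw⟩

/-- The isomorphism from the free product to `K`. -/
noncomputable def kiso (hinj : Function.Injective (phi H N T)) :
    Monoid.CoprodI (fun p : Σ i, ↥(T i) => ↥(PP H N T p)) ≃* ↥(K H N) :=
  MulEquiv.ofBijective (kinv H N T hrange) (kinv_bijective H N T hrange hinj)

/-- `N i` is isomorphic to its image in `G`. -/
noncomputable def d2 (i : ι) : ↥(N i) ≃* ↥((N i).map (H i).subtype) :=
  (N i).equivMapOfInjective (H i).subtype (H i).subtype_injective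

/-- The image of `N i` is isomorphic to its conjugate. -/
noncomputable def d1 (p : Σ i, ↥(T i)) :
    ↥((N p.1).map (H p.1).subtype) ≃* ↥(PP H N T p) :=
  ((N p.1).map (H p.1).subtype).equivMapOfInjective (MulAut.conj (p.2 : G)).toMonoidHom
    (fun _ _ hab => (MulAut.conj (p.2 : G)).injective hab)

/-- The element of `N i` corresponding to an element of the conjugate. -/
noncomputable def elt (p : Σ i, ↥(T i)) (x : ↥(PP H N T p)) : ↥(N p.1) :=
  (d2 H N p.1).symm ((d1 H N T p).symm x)

lemma d1_d2_coe (p : Σ i, ↥(T i)) (n : ↥(N p.1)) :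
    ((d1 H N T p (d2 H N p.1 n) : ↥(PP H N T p)) : G) =
      (p.2 : G) * ((n : ↥(H p.1)) : G) * (p.2 : G)⁻¹ := by
  rfl

lemma elt_spec (p : Σ i, ↥(T i)) (x : ↥(PP H N T p)) :
    (p.2 : G) * ((elt H N T p x : ↥(H p.1)) : G) * (p.2 : G)⁻¹ = (x : G) := by
  rw [elt, ← d1_d2_coe H N T p]
  simp

/-- The building block of the map to the direct sum. -/
noncomputable def uHom (p : Σ i, ↥(T i)) :
    ↥(PP H N T p) →* Multiplicative (⨁ i, Ind H N i) :=
  AddMonoidHom.toMultiplicativeRight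
    (((DirectSum.of (Ind H N) p.1).comp
        ((relSub (Q H N) ↥(H p.1) (N p.1) (fQ H N p.1)).mkQ.toAddMonoidHom.comp
          (TensorProduct.mk ℤ (MonoidAlgebra ℤ (Q H N)) (M H N p.1)
            (MonoidAlgebra.of ℤ (Q H N) (QuotientGroup.mk (p.2 : G)))).toAddMonoidHom)).comp
      (MonoidHom.toAdditive
        (Abelianization.of.comp
          (((d2 H N p.1).symm.toMonoidHom).comp ((d1 H N T p).symm.toMonoidHom)))))

lemma uHom_apply (p : Σ i, ↥(T i)) (x : ↥(PP H N T p)) :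
    uHom H N T p x = Multiplicative.ofAdd (DirectSum.of (Ind H N) p.1
      (Submodule.Quotient.mk
        (MonoidAlgebra.of ℤ (Q H N) (QuotientGroup.mk (p.2 : G)) ⊗ₜ[ℤ]
          Additive.ofMul (Abelianization.of (elt H N T p x))))) := rfl

noncomputable instance instACGInd : AddCommGroup (⨁ i, Ind H N i) :=
  @DirectSum.instAddCommGroup ι (fun i => Ind H N i) (fun i => inferInstance)

/-- The map from `K^{ab}` to the direct sum. -/
noncomputable def EHom (hinj : Function.Injective (phi H N T)) :
    AddK H N →+ (⨁ i, Ind H N i) :=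
  MonoidHom.toAdditiveLeft
    (Abelianization.lift
      ((Monoid.CoprodI.lift (uHom H N T)).comp
        (kiso H N T hrange hinj).symm.toMonoidHom))

lemma EHom_of (hinj : Function.Injective (phi H N T)) (x : ↥(K H N)) :
    EHom H N T hrange hinj (Additive.ofMul (Abelianization.of x)) =
      Multiplicative.toAdd
        ((Monoid.CoprodI.lift (uHom H N T)) ((kiso H N T hrange hinj).symm x)) := rfl

end CLProof
namespace CLProof

variable {G : Type*} [Group G] {ι : Type*} (H : ι → Subgroup G)
  (N : ∀ i, Subgroup ↥(H i)) [∀ i, (N i).Normal] [DecidableEq ι] (T : ι → Set G)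
  (hrange : (phi H N T).range = K H N)

lemma conjQA_mk_apply (g : G) (a : Abelianization ↥(K H N)) :
    conjQA H N (QuotientGroup.mk g) (Additive.ofMul a) = Additive.ofMul (conjK H N g a) := rfl

lemma inclAb_apply (i : ι) (a : Abelianization ↥(N i)) :
    inclAb H N i (Additive.ofMul a) = Additive.ofMul (Abelianization.map (inclK H N i) a) := rfl

lemma conjK_mul' (g₁ g₂ : G) (a : Abelianization ↥(K H N)) :
    conjK H N (g₁ * g₂) a = conjK H N g₁ (conjK H N g₂ a) :=
  DFunLike.congr_fun ((conjGEnd H N).map_mul g₁ g₂) a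

lemma Psi_lift_uHom (w : Monoid.CoprodI (fun p : Σ i, ↥(T i) => ↥(PP H N T p))) :
    Psi H N (Multiplicative.toAdd ((Monoid.CoprodI.lift (uHom H N T)) w)) =
      Additive.ofMul (Abelianization.of (kinv H N T hrange w)) := by
  induction w using Monoid.CoprodI.induction_on with
  | one => simp
  | of p x =>
      rw [Monoid.CoprodI.lift_of, uHom_apply, toAdd_ofAdd, Psi_of, psi_of]
      obtain ⟨i, t⟩ := p
      rw [inclAb_apply, conjQA_mk_apply]
      congr 1
      rw [Abelianization.map_of, conjK_of]
      congr 1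
      ext
      rw [MulAut.conjNormal_apply, inclK_coe]
      exact elt_spec H N T ⟨i, t⟩ x
  | mul x y hx hy =>
      rw [map_mul, toAdd_mul, map_add, hx, hy, map_mul, map_mul, ofMul_mul]

lemma Psi_EHom (hinj : Function.Injective (phi H N T)) (y : AddK H N) :
    Psi H N (EHom H N T hrange hinj y) = y := by
  obtain ⟨x, hx⟩ := ab_of_surj (Additive.toMul y)
  have hy : y = Additive.ofMul (Abelianization.of x) := by rw [hx]; rfl
  rw [hy, EHom_of, Psi_lift_uHom H N T hrange]
  congr 2
  calc kinv H N T hrange ((kiso H N T hrange hinj).symm x)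
      = kiso H N T hrange hinj ((kiso H N T hrange hinj).symm x) := rfl
    _ = x := MulEquiv.apply_symm_apply _ x

end CLProof
namespace CLProof

variable {G : Type*} [Group G] {ι : Type*} (H : ι → Subgroup G)
  (N : ∀ i, Subgroup ↥(H i)) [∀ i, (N i).Normal] [DecidableEq ι] (T : ι → Set G)
  (hrange : (phi H N T).range = K H N)

lemma core (hinj : Function.Injective (phi H N T))
    (htrans : ∀ i, IsLeftTransversal (H i ⊔ K H N) (T i)) (i : ι) (q : Q H N) (n : ↥(N i)) :
    EHom H N T hrange hinj (Psi H N (DirectSum.of (Ind H N) i (Submodule.Quotient.mk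
        (MonoidAlgebra.of ℤ (Q H N) q ⊗ₜ[ℤ] Additive.ofMul (Abelianization.of n))))) =
      DirectSum.of (Ind H N) i (Submodule.Quotient.mk
        (MonoidAlgebra.of ℤ (Q H N) q ⊗ₜ[ℤ] Additive.ofMul (Abelianization.of n))) := by
  obtain ⟨g, rfl⟩ := QuotientGroup.mk_surjective q
  obtain ⟨t, ⟨hT, hmem⟩, -⟩ := htrans i g
  rw [← SetLike.mem_coe, Subgroup.mul_normal] at hmem
  obtain ⟨h, hh, k, hk, heq⟩ := hmem
  -- `g = t * h * k`, hence `mk g = mk (t * h)`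
  have heq' : h * k = t⁻¹ * g := heq
  have hg : g = t * (h * k) := by
    rw [heq']
    group
  have hq : (QuotientGroup.mk (t * h) : Q H N) = QuotientGroup.mk g := by
    rw [QuotientGroup.eq]
    rw [hg]
    group
    simpa using hk
  set hH : ↥(H i) := ⟨h, hh⟩ with hHdef
  set n' : ↥(N i) := MulAut.conjNormal hH n with hn'def
  -- compute the `Psi` value
  have hpsi : Psi H N (DirectSum.of (Ind H N) i (Submodule.Quotient.mk
      (MonoidAlgebra.of ℤ (Q H N) (QuotientGroup.mk g) ⊗ₜ[ℤ]
        Additive.ofMul (Abelianization.of n)))) =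
      Additive.ofMul (Abelianization.of
        (MulAut.conjNormal t (inclK H N i n'))) := by
    have hX : MulAut.conjNormal h (inclK H N i n) = inclK H N i n' := by
      ext
      rw [MulAut.conjNormal_apply, inclK_coe, inclK_coe, hn'def]
      simp [MulAut.conjNormal_apply, hHdef]
    rw [Psi_of, psi_of, ← hq, inclAb_apply, conjQA_mk_apply, Abelianization.map_of,
      conjK_mul', conjK_of, hX, conjK_of]
  rw [hpsi]
  -- identify the element as a generator of the free product
  set p : Σ j, ↥(T j) := ⟨i, ⟨t, hT⟩⟩ with hpdef
  have hxPmem : t * ((n' : ↥(H i)) : G) * t⁻¹ ∈ PP H N T p := by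
    have h1 : ((n' : ↥(H i)) : G) ∈ (N i).map (H i).subtype :=
      Subgroup.mem_map.2 ⟨n', n'.2, rfl⟩
    refine Subgroup.mem_map.2 ⟨((n' : ↥(H i)) : G), h1, ?_⟩
    simp
    rfl
  set xP : ↥(PP H N T p) := ⟨t * ((n' : ↥(H i)) : G) * t⁻¹, hxPmem⟩ with hxPdef
  set wP : Monoid.CoprodI (fun p : Σ j, ↥(T j) => ↥(PP H N T p)) := Monoid.CoprodI.of xP
    with hwPdef
  have hkx : kinv H N T hrange wP = MulAut.conjNormal t (inclK H N i n') := by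
    ext
    rw [kinv_coe]
    show phi H N T wP = _
    rw [hwPdef, phi, Monoid.CoprodI.lift_of]
    show (xP : G) = _
    rw [MulAut.conjNormal_apply, inclK_coe]
  have hsymm : (kiso H N T hrange hinj).symm
      (MulAut.conjNormal t (inclK H N i n')) = wP := by
    rw [MulEquiv.symm_apply_eq]
    exact hkx.symm
  rw [EHom_of, hsymm, hwPdef, Monoid.CoprodI.lift_of, uHom_apply, toAdd_ofAdd]
  -- compute `elt`
  have helt : elt H N T p xP = n' := by
    have h12 : d1 H N T p (d2 H N i n') = xP := by
      ext
      rw [d1_d2_coe]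
    rw [elt, ← h12, MulEquiv.symm_apply_apply, MulEquiv.symm_apply_apply]
  rw [helt]
  -- now use the defining relation of `relSub`
  congr 1
  rw [Submodule.Quotient.eq]
  have hofg : MonoidAlgebra.of ℤ (Q H N) (QuotientGroup.mk g) =
      MonoidAlgebra.of ℤ (Q H N) (QuotientGroup.mk t) *
        MonoidAlgebra.of ℤ (Q H N) (fQ H N i hH) := by
    rw [← map_mul]
    congr 1
    show QuotientGroup.mk g = QuotientGroup.mk t * QuotientGroup.mk h
    rw [← QuotientGroup.mk_mul]
    exact hq.symm
  have hrew : Additive.ofMul (Abelianization.of n') =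
      Additive.ofMul ((Abelianization.map (MulAut.conjNormal hH).toMonoidHom)
        (Additive.toMul (Additive.ofMul (Abelianization.of n)))) := by
    rw [hn'def]
    rfl
  have hgen : MonoidAlgebra.of ℤ (Q H N) (QuotientGroup.mk g) ⊗ₜ[ℤ]
        Additive.ofMul (Abelianization.of n) -
      MonoidAlgebra.of ℤ (Q H N) (QuotientGroup.mk t) ⊗ₜ[ℤ]
        Additive.ofMul (Abelianization.of n') ∈
      relSub (Q H N) ↥(H i) (N i) (fQ H N i) := by
    refine Submodule.subset_span ⟨MonoidAlgebra.of ℤ (Q H N) (QuotientGroup.mk t), hH,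
      Additive.ofMul (Abelianization.of n), ?_⟩
    rw [hofg, hrew]
  have hneg := (relSub (Q H N) ↥(H i) (N i) (fQ H N i)).neg_mem hgen
  rwa [neg_sub] at hneg

end CLProof
namespace CLProof

variable {G : Type*} [Group G] {ι : Type*} (H : ι → Subgroup G)
  (N : ∀ i, Subgroup ↥(H i)) [∀ i, (N i).Normal] [DecidableEq ι] (T : ι → Set G)
  (hrange : (phi H N T).range = K H N)

lemma EHom_Psi (hinj : Function.Injective (phi H N T))
    (htrans : ∀ i, IsLeftTransversal (H i ⊔ K H N) (T i)) (y : ⨁ i, Ind H N i) :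
    EHom H N T hrange hinj (Psi H N y) = y := by
  refine DFunLike.congr_fun
    (?_ : (EHom H N T hrange hinj).comp (Psi H N) = AddMonoidHom.id _) y
  refine DirectSum.addHom_ext fun i z => ?_
  obtain ⟨v, rfl⟩ := Submodule.Quotient.mk_surjective _ z
  set Fh : (MonoidAlgebra ℤ (Q H N) ⊗[ℤ] M H N i) →+ (⨁ i, Ind H N i) :=
    (DirectSum.of (Ind H N) i).comp
      ((relSub (Q H N) ↥(H i) (N i) (fQ H N i)).mkQ.toAddMonoidHom) with hFh
  set Gh : (MonoidAlgebra ℤ (Q H N) ⊗[ℤ] M H N i) →+ (⨁ i, Ind H N i) :=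
    ((EHom H N T hrange hinj).comp (Psi H N)).comp Fh with hGh
  show Gh v = Fh v
  have hcore : ∀ (q : Q H N) (n : ↥(N i)),
      Gh (MonoidAlgebra.of ℤ (Q H N) q ⊗ₜ[ℤ] Additive.ofMul (Abelianization.of n)) =
      Fh (MonoidAlgebra.of ℤ (Q H N) q ⊗ₜ[ℤ] Additive.ofMul (Abelianization.of n)) :=
    fun q n => core H N T hrange hinj htrans i q n
  induction v with
  | zero => rw [map_zero, map_zero]
  | add y z hy hz => rw [map_add, map_add, hy, hz]
  | tmul a m =>
      induction a using MonoidAlgebra.induction_linear with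
      | zero => rw [TensorProduct.zero_tmul, map_zero, map_zero]
      | add f g hf hg =>
          rw [TensorProduct.add_tmul, map_add, map_add, hf, hg]
      | single q c =>
          obtain ⟨n, hn⟩ := ab_of_surj (Additive.toMul m)
          have hm : m = Additive.ofMul (Abelianization.of n) := by rw [hn]; rfl
          rw [hm]
          have hcore1 : Gh ((MonoidAlgebra.single q 1 : MonoidAlgebra ℤ (Q H N)) ⊗ₜ[ℤ]
                Additive.ofMul (Abelianization.of n)) =
              Fh ((MonoidAlgebra.single q 1 : MonoidAlgebra ℤ (Q H N)) ⊗ₜ[ℤ]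
                Additive.ofMul (Abelianization.of n)) := hcore q n
          induction c using Int.induction_on with
          | zero =>
              rw [show (MonoidAlgebra.single q (0 : ℤ) : MonoidAlgebra ℤ (Q H N)) = 0 from
                MonoidAlgebra.single_zero q, TensorProduct.zero_tmul, map_zero, map_zero]
          | succ c ih =>
              rw [show (MonoidAlgebra.single q ((c : ℤ) + 1) : MonoidAlgebra ℤ (Q H N)) =
                  MonoidAlgebra.single q (c : ℤ) + MonoidAlgebra.single q 1 from
                MonoidAlgebra.single_add q _ _, TensorProduct.add_tmul, map_add, map_add, ih, hcore1]
          | pred c ih =>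
              rw [show (MonoidAlgebra.single q (-(c : ℤ) - 1) : MonoidAlgebra ℤ (Q H N)) =
                  MonoidAlgebra.single q (-(c : ℤ)) + MonoidAlgebra.single q (-1) from by
                    rw [← MonoidAlgebra.single_add]; ring_nf,
                TensorProduct.add_tmul, map_add, map_add, ih]
              congr 1
              rw [show (MonoidAlgebra.single q (-1 : ℤ) : MonoidAlgebra ℤ (Q H N)) =
                  -MonoidAlgebra.single q (1 : ℤ) from MonoidAlgebra.single_neg q 1,
                TensorProduct.neg_tmul, map_neg, map_neg, hcore1]

end CLProof
/-- **The Cohen–Lyndon property determines the relative relation module of a Dehn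
filling.** Let `G` be a group, `{H i}` a family of subgroups of `G`, and for each `i` let
`N i` be a nontrivial normal subgroup of `H i`. Let `⟪N⟫` be the normal closure in `G` of
the union of the `N i`, `Q = G/⟪N⟫` and `R i = H i / N i`. If the triple
`(G, {H i}, {N i})` has the Cohen-Lyndon property, then
`Rel(G, ⟪N⟫) ≅ ⨁ i, ℤQ ⊗_{ℤR i} Rel(H i, N i)` as `ℤQ`-modules. -/
theorem cohenLyndon_relModule {G : Type*} [Group G] {ι : Type*}
    (H : ι → Subgroup G) (N : ∀ i, Subgroup ↥(H i)) [∀ i, (N i).Normal]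
    (hnt : ∀ i, N i ≠ ⊥)
    (hCL : CohenLyndonFamily H (fun j => (N j).map (H j).subtype)) :
    RelModuleIsoIndFam G (fun j => (H j).subtype) N
      (familyNC (fun j => (N j).map (H j).subtype)) := by
  classical
  obtain ⟨T, htrans, hinj, hrange⟩ := hCL
  refine ⟨{ toFun := CLProof.EHom H N T hrange hinj,
            invFun := CLProof.Psi H N,
            left_inv := fun y => CLProof.Psi_EHom H N T hrange hinj y,
            right_inv := fun y => CLProof.EHom_Psi H N T hrange hinj htrans y,
            map_add' := (CLProof.EHom H N T hrange hinj).map_add }, ?_⟩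
  intro g x
  have h1 : Additive.ofMul ((Abelianization.map (MulAut.conjNormal g).toMonoidHom)
      (Additive.toMul x)) = CLProof.conjQA H N (QuotientGroup.mk g) x := rfl
  show CLProof.EHom H N T hrange hinj (Additive.ofMul _) =
    MonoidAlgebra.of ℤ (G ⧸ CLProof.K H N) (QuotientGroup.mk g) •
      CLProof.EHom H N T hrange hinj x
  rw [h1]
  have h2 : CLProof.conjQA H N (QuotientGroup.mk g) x =
      CLProof.Psi H N (MonoidAlgebra.of ℤ (CLProof.Q H N) (QuotientGroup.mk g) •
        CLProof.EHom H N T hrange hinj x) := by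
    rw [CLProof.Psi_smul, CLProof.Psi_EHom]
  rw [h2, CLProof.EHom_Psi H N T hrange hinj htrans]
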